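/- arXiv:2502.08951 — 2 statements merged into one kernel-verified Lean document; each statement's English description precedes it below -/
import Mathlib

section
/- Let A(t) ∈ ℝ^{m₁×m₂} have rank exactly r for all t ∈ [t⁰, t¹], with factorization A(t) = X(t) S(t) V(t)ᵀ (X, V having orthonormal columns). If V(t¹)ᵀ V(t⁰) is invertible, then the solution K(t) = A(t) V(t⁰) of the K-equation K̇ = Ȧ V(t⁰) with K(t⁰) = X(t⁰)S(t⁰) satisfies: the column span of K(t¹) equals the column span (range) of A(t¹). -/
open Matrix


lemma range_mul_of_surj {m n p : ℕ} (M : Matrix (Fin m) (Fin n) ℝ)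
    (N : Matrix (Fin n) (Fin p) ℝ) (h : Function.Surjective N.mulVecLin) :
    LinearMap.range (M * N).mulVecLin = LinearMap.range M.mulVecLin := by
  rw [Matrix.mulVecLin_mul, LinearMap.range_comp, LinearMap.range_eq_top.mpr h,
    Submodule.map_top]

/-- Exactness lemma for the K-step: if `A t` has rank exactly `r` on `[t0, t1]` with
orthonormal factorization `A t = X t * S t * (V t)ᵀ` and `(V t1)ᵀ * V t0` is invertible,
then `K t1 = A t1 * V t0` (the solution of the K-equation with `K t0 = X t0 * S t0`)
has the same column span (range) as `A t1`. -/
theorem k_step_range {m₁ m₂ r : ℕ}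
    (A : ℝ → Matrix (Fin m₁) (Fin m₂) ℝ)
    (X : ℝ → Matrix (Fin m₁) (Fin r) ℝ)
    (S : ℝ → Matrix (Fin r) (Fin r) ℝ)
    (V : ℝ → Matrix (Fin m₂) (Fin r) ℝ)
    (t0 t1 : ℝ) (ht : t0 ≤ t1)
    (hrank : ∀ t ∈ Set.Icc t0 t1, (A t).rank = r)
    (hfact : ∀ t ∈ Set.Icc t0 t1, A t = X t * S t * (V t)ᵀ)
    (hXorth : ∀ t ∈ Set.Icc t0 t1, (X t)ᵀ * X t = 1)
    (hVorth : ∀ t ∈ Set.Icc t0 t1, (V t)ᵀ * V t = 1)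
    (hinv : IsUnit ((V t1)ᵀ * V t0))
    (K : ℝ → Matrix (Fin m₁) (Fin r) ℝ)
    (hK : ∀ t ∈ Set.Icc t0 t1, K t = A t * V t0)
    (hK0 : K t0 = X t0 * S t0) :
    LinearMap.range (K t1).mulVecLin = LinearMap.range (A t1).mulVecLin := by
  have h1 : t1 ∈ Set.Icc t0 t1 := ⟨ht, le_refl _⟩
  have hsurjVt : Function.Surjective ((V t1)ᵀ).mulVecLin := by
    intro y
    exact ⟨(V t1).mulVecLin y, by
      have := hVorth t1 h1
      have : ((V t1)ᵀ * V t1).mulVecLin y = y := by rw [this]; simp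
      simpa [Matrix.mulVecLin_mul] using this⟩
  have hsurjB : Function.Surjective ((V t1)ᵀ * V t0).mulVecLin := by
    obtain ⟨B, hB⟩ := hinv.exists_right_inv
    intro y
    exact ⟨B.mulVecLin y, by
      have : (((V t1)ᵀ * V t0) * B).mulVecLin y = y := by rw [hB]; simp
      simpa [Matrix.mulVecLin_mul] using this⟩
  rw [hK t1 h1, hfact t1 h1]
  calc LinearMap.range (X t1 * S t1 * (V t1)ᵀ * V t0).mulVecLin
      = LinearMap.range ((X t1 * S t1) * ((V t1)ᵀ * V t0)).mulVecLin := by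
        rw [Matrix.mul_assoc, Matrix.mul_assoc]
    _ = LinearMap.range (X t1 * S t1).mulVecLin := range_mul_of_surj _ _ hsurjB
    _ = LinearMap.range ((X t1 * S t1) * (V t1)ᵀ).mulVecLin :=
        (range_mul_of_surj _ _ hsurjVt).symm
end

section
/- Consider the penalized implicit Euler step for the scalar linear relaxation g^{n+1} = g^n·(ε + D Δt)/(ε + λ Δt), where g = f − M measures deviation from equilibrium, and D, λ > 0 are constants with |D| ≤ αλ for some α < 1 and Δt ≥ ε/(λ(1−α))·|D − αλ|⁺. Then |g^{n+1}| ≤ max(α, 1) |g^n|, and as ε → 0 (with Δt fixed), |g^{n+1}| ≤ (|D|/λ)|g^n| ≤ α |g^n|. -/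
open Filter

/-- Stability of the penalized implicit Euler step for scalar linear relaxation:
`g^{n+1} = g^n (ε + DΔt)/(ε + λΔt)` satisfies `|g^{n+1}| ≤ max(α,1)|g^n|`, and in the
stiff limit `ε → 0` the amplification factor tends to `D/λ`, giving
`|g^{n+1}| ≤ (|D|/λ)|g^n| ≤ α|g^n|`. -/
theorem penalized_relaxation_stability (g D lam α Δt : ℝ)
    (hD : 0 < D) (hlam : 0 < lam) (hα : |D| ≤ α * lam) (hα1 : α < 1) (hΔt : 0 < Δt)
    (gnew : ℝ → ℝ)
    (hg : ∀ ε > (0 : ℝ), gnew ε = g * ((ε + D * Δt) / (ε + lam * Δt))) :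
    (∀ ε > (0 : ℝ), Δt ≥ ε / (lam * (1 - α)) * max (D - α * lam) 0 →
        |gnew ε| ≤ max α 1 * |g|) ∧
    Tendsto gnew (nhdsWithin 0 (Set.Ioi 0)) (nhds (g * (D / lam))) ∧
    |g * (D / lam)| ≤ |D| / lam * |g| ∧ |D| / lam * |g| ≤ α * |g| := by
  have hDabs : |D| = D := abs_of_pos hD
  have hDlam : D ≤ lam := by
    have : α * lam ≤ 1 * lam := by nlinarith
    linarith [hDabs ▸ hα]
  refine ⟨?_, ?_, ?_, ?_⟩
  · intro ε hε _
    rw [hg ε hε, abs_mul]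
    have hden : 0 < ε + lam * Δt := by positivity
    have hratio : |(ε + D * Δt) / (ε + lam * Δt)| ≤ 1 := by
      rw [abs_div, abs_of_pos hden, abs_of_pos (by positivity : (0:ℝ) < ε + D * Δt),
        div_le_one hden]
      nlinarith
    calc |g| * |(ε + D * Δt) / (ε + lam * Δt)| ≤ |g| * 1 :=
          mul_le_mul_of_nonneg_left hratio (abs_nonneg g)
      _ ≤ max α 1 * |g| := by
          rw [mul_one]; nth_rewrite 1 [← one_mul |g|]
          exact mul_le_mul_of_nonneg_right (le_max_right α 1) (abs_nonneg g)
  · have h1 : Tendsto (fun ε : ℝ => g * ((ε + D * Δt) / (ε + lam * Δt)))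
        (nhdsWithin 0 (Set.Ioi 0)) (nhds (g * (D / lam))) := by
      have : Tendsto (fun ε : ℝ => g * ((ε + D * Δt) / (ε + lam * Δt)))
          (nhds 0) (nhds (g * ((0 + D * Δt) / (0 + lam * Δt)))) := by
        apply Tendsto.const_mul
        apply Tendsto.div
        · exact (continuous_id.add continuous_const).tendsto 0
        · exact (continuous_id.add continuous_const).tendsto 0
        · positivity
      have heq : g * ((0 + D * Δt) / (0 + lam * Δt)) = g * (D / lam) := by
        field_simp; ring
      rw [heq] at this
      exact this.mono_left nhdsWithin_le_nhds
    exact h1.congr' (eventually_nhdsWithin_of_forall fun ε hε => (hg ε hε).symm)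
  · rw [abs_mul, abs_div, abs_of_pos hlam, mul_comm]
  · have : |D| / lam ≤ α := by
      rw [div_le_iff₀ hlam]; exact hα
    exact mul_le_mul_of_nonneg_right this (abs_nonneg g)
end
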